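/- Let σ ≥ 0 and J > √(1+σ), and define l(n) = ln n − (J²/2)(1 − 1/n²) + σ ln n for n > 0. Then l has exactly two zeros in (0,∞): n = 1 and a second zero n_ce satisfying 1 < J/√(1+σ) < n_ce. -/

import Mathlib

open Real Set

theorem stmt_5 (σ J : ℝ) (hσ : 0 ≤ σ) (hJ : Real.sqrt (1 + σ) < J)
    (l : ℝ → ℝ)
    (hl : ∀ n : ℝ, 0 < n →
      l n = Real.log n - J ^ 2 / 2 * (1 - 1 / n ^ 2) + σ * Real.log n) :
    ∃ nce : ℝ, 1 < J / Real.sqrt (1 + σ) ∧ J / Real.sqrt (1 + σ) < nce ∧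
      l 1 = 0 ∧ l nce = 0 ∧
      ∀ n : ℝ, 0 < n → l n = 0 → n = 1 ∨ n = nce := by
  set a : ℝ := 1 + σ with ha
  have ha0 : (0:ℝ) < a := by positivity
  have hsa : 0 < Real.sqrt a := Real.sqrt_pos.mpr ha0
  have hsa1 : 1 ≤ Real.sqrt a := by
    rw [show (1:ℝ) = Real.sqrt 1 by simp]
    exact Real.sqrt_le_sqrt (by linarith)
  have hJ0 : 0 < J := lt_trans hsa hJ
  set m : ℝ := J / Real.sqrt a with hmdef
  have hm1 : 1 < m := (one_lt_div hsa).mpr hJ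
  have hm0 : 0 < m := by linarith
  have hm2 : m ^ 2 = J ^ 2 / a := by
    rw [hmdef, div_pow, Real.sq_sqrt ha0.le]
  set f : ℝ → ℝ := fun n => a * Real.log n - J ^ 2 / 2 * (1 - (n ^ 2)⁻¹) with hf
  have hlf : ∀ n, 0 < n → l n = f n := by
    intro n hn
    rw [hl n hn, hf]; ring
  have hderiv : ∀ n : ℝ, 0 < n → HasDerivAt f ((a * n ^ 2 - J ^ 2) / n ^ 3) n := by
    intro n hn
    have h1 : HasDerivAt Real.log (1 / n) n := by
      simpa [one_div] using Real.hasDerivAt_log hn.ne'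
    have h2 : HasDerivAt (fun x : ℝ => x ^ 2) (2 * n) n := by
      simpa using hasDerivAt_pow 2 n
    have h3 : HasDerivAt (fun x : ℝ => (x ^ 2)⁻¹) (-(2 * n) / (n ^ 2) ^ 2) n :=
      h2.inv (by positivity)
    have h4 := (h1.const_mul a).sub ((h3.const_sub 1).const_mul (J ^ 2 / 2))
    refine h4.congr_deriv ?_
    field_simp
  have hcont : ∀ n : ℝ, 0 < n → ContinuousAt f n :=
    fun n hn => (hderiv n hn).continuousAt
  have hmono : StrictMonoOn f (Ici m) := by
    apply strictMonoOn_of_deriv_pos (convex_Ici m)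
    · exact fun n hn => (hcont n (lt_of_lt_of_le hm0 hn)).continuousWithinAt
    · intro n hn
      rw [interior_Ici] at hn
      have hn0 : 0 < n := lt_trans hm0 hn
      rw [(hderiv n hn0).deriv]
      apply div_pos _ (pow_pos hn0 3)
      have hmn : m < n := hn
      have h : m ^ 2 < n ^ 2 := by nlinarith
      rw [hm2, div_lt_iff₀ ha0] at h
      linarith
  have hanti : StrictAntiOn f (Ioc 0 m) := by
    apply strictAntiOn_of_deriv_neg (convex_Ioc 0 m)
    · exact fun n hn => (hcont n hn.1).continuousWithinAt
    · intro n hn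
      rw [interior_Ioc] at hn
      obtain ⟨hn1, hn2⟩ := hn
      rw [(hderiv n hn1).deriv]
      apply div_neg_of_neg_of_pos _ (pow_pos hn1 3)
      have h : n ^ 2 < m ^ 2 := by nlinarith
      rw [hm2, lt_div_iff₀ ha0] at h
      linarith
  have hf1 : f 1 = 0 := by simp [hf]
  have h1mem : (1:ℝ) ∈ Ioc (0:ℝ) m := ⟨one_pos, hm1.le⟩
  have hmmem : m ∈ Ioc (0:ℝ) m := ⟨hm0, le_refl m⟩
  have hfm : f m < 0 := by
    have := hanti h1mem hmmem hm1
    rwa [hf1] at this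
  -- a point where f is positive
  set T : ℝ := max m (Real.exp (J ^ 2 / a)) with hT
  have hmT : m ≤ T := le_max_left _ _
  have hT0 : 0 < T := lt_of_lt_of_le hm0 hmT
  have hTlog : J ^ 2 / a ≤ Real.log T := by
    rw [Real.le_log_iff_exp_le hT0]
    exact le_max_right _ _
  have hTlog' : J ^ 2 ≤ a * Real.log T := by
    rw [div_le_iff₀ ha0] at hTlog
    linarith
  have hfT : 0 < f T := by
    have hinv : 0 < (T ^ 2)⁻¹ := by positivity
    have hJ2 : 0 < J ^ 2 := by positivity
    rw [hf]
    have : J ^ 2 / 2 * (1 - (T ^ 2)⁻¹) < J ^ 2 := by nlinarith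
    dsimp only
    nlinarith [this, hTlog']
  -- IVT on [m, T]
  have hcontIcc : ContinuousOn f (Icc m T) :=
    fun n hn => (hcont n (lt_of_lt_of_le hm0 hn.1)).continuousWithinAt
  have hsub := intermediate_value_Icc hmT hcontIcc
  have h0mem : (0:ℝ) ∈ Icc (f m) (f T) := ⟨hfm.le, hfT.le⟩
  obtain ⟨c, hc, hfc⟩ := hsub h0mem
  have hcm : m < c := by
    rcases lt_or_eq_of_le hc.1 with h | h
    · exact h
    · exfalso; rw [← h] at hfc; rw [hfc] at hfm; exact lt_irrefl 0 hfm
  have hc0 : 0 < c := lt_trans hm0 hcm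
  refine ⟨c, hm1, hcm, ?_, ?_, ?_⟩
  · rw [hlf 1 one_pos, hf1]
  · rw [hlf c hc0, hfc]
  · intro n hn hln
    have hfn : f n = 0 := by rw [← hlf n hn]; exact hln
    rcases le_or_gt n m with h | h
    · left
      have hnmem : n ∈ Ioc (0:ℝ) m := ⟨hn, h⟩
      exact hanti.injOn hnmem h1mem (by rw [hfn, hf1])
    · right
      exact hmono.injOn (le_of_lt h) (le_of_lt hcm) (by rw [hfn, hfc])
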